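/- Let X and Y be finite multisets of points (b,d) with b ∈ ℝ and d ∈ ℝ ∪ {+∞}. Suppose that the multiset of first coordinates of the points of X with d = +∞ is not equal (as a multiset of reals) to the multiset of first coordinates of the points of Y with d = +∞ (i.e., the birth values of the essential classes differ). Then the unweighted squared L² distance ∫_{{(x,y) ∈ ℝ² : x < y}} (f_X(x,y) − f_Y(x,y))² d(x,y), taken with respect to Lebesgue measure on the plane, is infinite. -/

import Mathlib

open MeasureTheory

/-- The rank function of a persistence diagram given as a finite multiset of
points `(b, d)` with `b` real and `d ∈ ℝ ∪ {+∞}`: `rankFnTop D x y` is the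
number of points `(b, d)` of `D`, counted with multiplicity, with `b ≤ x` and
`y ≤ d`. -/
noncomputable def rankFnTop (D : Multiset (ℝ × WithTop ℝ)) (x y : ℝ) : ℝ :=
  (D.filter fun p => p.1 ≤ x ∧ (y : WithTop ℝ) ≤ p.2).card

/-- decomposition of the ≤ filter count at a point -/
lemma card_filter_le_eq (P : Multiset ℝ) (a : ℝ) :
    (P.filter (· ≤ a)).card = (P.filter (· < a)).card + P.count a := by
  have h := Multiset.filter_add_filter (p := (· < a)) (q := (· = a)) P
  have h1 : P.filter (fun b => b < a ∨ b = a) = P.filter (· ≤ a) := by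
    apply Multiset.filter_congr; intro b _; simp [le_iff_lt_or_eq]
  have h2 : P.filter (fun b => b < a ∧ b = a) = 0 := by
    apply Multiset.filter_eq_nil.2; rintro b _ ⟨h3, rfl⟩; exact lt_irrefl _ h3
  rw [h1, h2, add_zero] at h
  rw [← h, Multiset.card_add]
  congr 1
  rw [Multiset.count_eq_card_filter_eq]
  congr 1
  exact Multiset.filter_congr fun b _ => eq_comm

lemma multiset_eq_of_counts (M N : Multiset ℝ)
    (h : ∀ x, (M.filter (· ≤ x)).card = (N.filter (· ≤ x)).card) : M = N := by
  ext a
  -- count of filter (< a) agree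
  set s : Finset ℝ := (M + N).toFinset.filter (· < a) with hs
  have hmem : ∀ b, b ∈ s ↔ b ∈ M + N ∧ b < a := by
    intro b; rw [hs, Finset.mem_filter, Multiset.mem_toFinset]
  have key : (M.filter (· < a)).card = (N.filter (· < a)).card := by
    rcases s.eq_empty_or_nonempty with he | hne
    · have e1 : M.filter (· < a) = 0 := by
        apply Multiset.filter_eq_nil.2; intro b hb hba
        have : b ∈ s := (hmem b).2 ⟨Multiset.mem_add.2 (Or.inl hb), hba⟩
        simp [he] at this
      have e2 : N.filter (· < a) = 0 := by
        apply Multiset.filter_eq_nil.2; intro b hb hba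
        have : b ∈ s := (hmem b).2 ⟨Multiset.mem_add.2 (Or.inr hb), hba⟩
        simp [he] at this
      rw [e1, e2]
    · set x := s.max' hne with hx
      have hxa : x < a := ((hmem _).1 (s.max'_mem hne)).2
      have conv : ∀ P : Multiset ℝ, (∀ b ∈ P, b ∈ M + N) →
          P.filter (· < a) = P.filter (· ≤ x) := by
        intro P hP
        apply Multiset.filter_congr; intro b hb
        constructor
        · intro hba
          apply Finset.le_max'
          exact (hmem b).2 ⟨hP b hb, hba⟩
        · intro hbx; exact lt_of_le_of_lt hbx hxa
      rw [conv M (fun b hb => Multiset.mem_add.2 (Or.inl hb)),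
          conv N (fun b hb => Multiset.mem_add.2 (Or.inr hb))]
      exact h x
  have hM := card_filter_le_eq M a
  have hN := card_filter_le_eq N a
  have hha := h a
  omega

theorem unweighted_sq_distance_infinite_of_essential_births_differ
    (X Y : Multiset (ℝ × WithTop ℝ))
    (hbirths : (X.filter fun p => p.2 = ⊤).map Prod.fst
      ≠ (Y.filter fun p => p.2 = ⊤).map Prod.fst) :
    ∫⁻ p in {q : ℝ × ℝ | q.1 < q.2},
      ENNReal.ofReal ((rankFnTop X p.1 p.2 - rankFnTop Y p.1 p.2) ^ 2) = ⊤ := by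
  classical
  set EX := (X.filter fun p => p.2 = ⊤).map Prod.fst with hEX
  set EY := (Y.filter fun p => p.2 = ⊤).map Prod.fst with hEY
  -- find x₀ where counts differ
  obtain ⟨x₀, hx₀⟩ : ∃ x, (EX.filter (· ≤ x)).card ≠ (EY.filter (· ≤ x)).card := by
    by_contra h
    push_neg at h
    exact hbirths (multiset_eq_of_counts EX EY h)
  -- find δ > 0 such that no element of EX + EY lies in (x₀, x₀ + δ)
  obtain ⟨δ, hδpos, hδ⟩ : ∃ δ > 0, ∀ b ∈ EX + EY, x₀ < b → x₀ + δ ≤ b := by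
    set T : Finset ℝ := (EX + EY).toFinset.filter (x₀ < ·) with hT
    have hmem : ∀ b, b ∈ T ↔ b ∈ EX + EY ∧ x₀ < b := by
      intro b; rw [hT, Finset.mem_filter, Multiset.mem_toFinset]
    rcases T.eq_empty_or_nonempty with he | hne
    · refine ⟨1, one_pos, ?_⟩
      intro b hb hxb
      exfalso
      have : b ∈ T := (hmem b).2 ⟨hb, hxb⟩
      simp [he] at this
    · refine ⟨T.min' hne - x₀, ?_, ?_⟩
      · have := ((hmem _).1 (T.min'_mem hne)).2
        linarith
      · intro b hb hxb
        have : T.min' hne ≤ b := by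
          apply Finset.min'_le
          exact (hmem b).2 ⟨hb, hxb⟩
        linarith
  -- stability of counts on [x₀, x₀+δ)
  have stab : ∀ P : Multiset ℝ, (∀ b ∈ P, b ∈ EX + EY) → ∀ x, x₀ ≤ x → x < x₀ + δ →
      (P.filter (· ≤ x)).card = (P.filter (· ≤ x₀)).card := by
    intro P hP x hx1 hx2
    congr 1
    apply Multiset.filter_congr; intro b hb
    constructor
    · intro hbx
      by_contra hbx0
      push_neg at hbx0
      have := hδ b (hP b hb) hbx0
      linarith
    · intro hbx0; linarith
  -- bound on finite deaths
  obtain ⟨C, hC⟩ : ∃ C : ℝ, ∀ p ∈ X + Y, ∀ d : ℝ, p.2 = (d : WithTop ℝ) → d ≤ C := by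
    obtain ⟨C, hC⟩ := Finset.exists_le (((X + Y).map (fun p => WithTop.untopD 0 p.2)).toFinset)
    refine ⟨C, fun p hp d hd => ?_⟩
    have : d = WithTop.untopD 0 p.2 := by rw [hd]; rfl
    rw [this]
    apply hC
    rw [Multiset.mem_toFinset]
    exact Multiset.mem_map_of_mem _ hp
  -- the rank function for large y
  have rank_eq : ∀ (D : Multiset (ℝ × WithTop ℝ)), (∀ p ∈ D, p ∈ X + Y) →
      ∀ x y : ℝ, C < y →
      rankFnTop D x y = (((D.filter fun p => p.2 = ⊤).map Prod.fst).filter (· ≤ x)).card := by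
    intro D hD x y hy
    rw [rankFnTop]
    rw [Multiset.filter_map, Multiset.card_map, Multiset.filter_filter]
    norm_cast
    congr 1
    apply Multiset.filter_congr
    intro p hp
    rcases hp2 : p.2 with _ | d
    · simp [hp2]; tauto
    · have hd : d ≤ C := hC p (hD p hp) d hp2
      have : ¬ ((y : WithTop ℝ) ≤ (d : WithTop ℝ)) := by
        rw [WithTop.coe_le_coe]; linarith
      constructor
      · rintro ⟨-, h2⟩
        exact absurd h2 this
      · rintro ⟨-, h2⟩
        exact absurd h2 WithTop.coe_ne_top
  set M : ℝ := max C (x₀ + δ) with hM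
  set S : Set (ℝ × ℝ) := Set.Ico x₀ (x₀ + δ) ×ˢ Set.Ioi M with hS
  have hSsub : S ⊆ {q : ℝ × ℝ | q.1 < q.2} := by
    rintro ⟨x, y⟩ ⟨hx, hy⟩
    simp only [Set.mem_setOf_eq]
    calc x < x₀ + δ := hx.2
    _ ≤ M := le_max_right _ _
    _ < y := hy
  have hmeas : MeasurableSet S := (measurableSet_Ico.prod measurableSet_Ioi)
  -- on S, integrand ≥ 1
  have hlb : ∀ q ∈ S, (1 : ENNReal) ≤
      ENNReal.ofReal ((rankFnTop X q.1 q.2 - rankFnTop Y q.1 q.2) ^ 2) := by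
    rintro ⟨x, y⟩ ⟨hx, hy⟩
    have hyC : C < y := lt_of_le_of_lt (le_max_left _ _) hy
    have e1 : rankFnTop X x y = ((EX.filter (· ≤ x₀)).card : ℝ) := by
      rw [rank_eq X (fun p hp => Multiset.mem_add.2 (Or.inl hp)) x y hyC, ← hEX,
        stab EX (fun b hb => Multiset.mem_add.2 (Or.inl hb)) x hx.1 hx.2]
    have e2 : rankFnTop Y x y = ((EY.filter (· ≤ x₀)).card : ℝ) := by
      rw [rank_eq Y (fun p hp => Multiset.mem_add.2 (Or.inr hp)) x y hyC, ← hEY,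
        stab EY (fun b hb => Multiset.mem_add.2 (Or.inr hb)) x hx.1 hx.2]
    rw [e1, e2]
    set nX := (EX.filter (· ≤ x₀)).card
    set nY := (EY.filter (· ≤ x₀)).card
    have hne : nX ≠ nY := hx₀
    have h1 : (1 : ℝ) ≤ ((nX : ℝ) - nY) ^ 2 := by
      have h2 : ((nX : ℤ) - nY) ≠ 0 := sub_ne_zero.2 (by exact_mod_cast hne)
      have h3 : (1 : ℤ) ≤ |(nX : ℤ) - nY| := Int.one_le_abs h2
      have h4 : (1 : ℝ) ≤ |(nX : ℝ) - (nY : ℝ)| := by exact_mod_cast h3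
      nlinarith [abs_nonneg ((nX : ℝ) - nY), sq_abs ((nX : ℝ) - nY)]
    calc (1 : ENNReal) = ENNReal.ofReal 1 := ENNReal.ofReal_one.symm
    _ ≤ _ := ENNReal.ofReal_le_ofReal h1
  -- conclude
  rw [eq_top_iff]
  calc (⊤ : ENNReal) = volume S := by
        rw [hS]
        rw [Measure.volume_eq_prod, Measure.prod_prod, Real.volume_Ico, Real.volume_Ioi]
        have hne0 : ENNReal.ofReal (x₀ + δ - x₀) ≠ 0 := by
          simp only [ne_eq, ENNReal.ofReal_eq_zero, not_le]
          linarith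
        rw [ENNReal.mul_top hne0]
  _ = ∫⁻ _ in S, 1 := (setLIntegral_one S).symm
  _ ≤ ∫⁻ q in S, ENNReal.ofReal ((rankFnTop X q.1 q.2 - rankFnTop Y q.1 q.2) ^ 2) :=
        setLIntegral_mono' hmeas hlb
  _ ≤ _ := lintegral_mono_set hSsub
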